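/- Let r ≥ 1 and n = 2^r. Let W ∈ (ℤ/2)[t₁,…,tₙ] be the product W = ∏_{j=1}^{n−1} (1 + t_j + t_j² + ⋯ + t_j^{j}), and let W_{n−1} denote its homogeneous component of degree n−1. Then the image of W_{n−1} in the quotient ring (ℤ/2)[t₁,…,tₙ]/𝒯ₙ equals the image of the monomial t₁t₂⋯t_{n−1}, and this image is nonzero. -/

import Mathlib

open MvPolynomial Finset

def Dc : ℕ → ℕ → ℕ
  | 0, s => if s = 0 then 1 else 0
  | (m+1), s => if s ≤ m+1 then ∑ t ∈ Finset.range (s+1), Dc m t else 0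

lemma hockey (c : ℕ) : ∀ s : ℕ, ∑ t ∈ Finset.range (s+1), (c+t).choose c = (c+s+1).choose (c+1) := by
  intro s
  induction s with
  | zero => simp
  | succ s ih =>
    rw [Finset.sum_range_succ, ih]
    have h1 : c + (s+1) = (c + s + 1) := by ring
    rw [h1, Nat.choose_succ_succ' (c+s+1) c]
    omega

lemma hockey' (c : ℕ) : ∀ s : ℕ, ∑ t ∈ Finset.range (s+1), (c+t).choose (c+1) = (c+s+1).choose (c+2) := by
  intro s
  cases s with
  | zero =>
    have h0 : (c+0).choose (c+1) = 0 := Nat.choose_eq_zero_of_lt (by omega)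
    have h1 : (c+0+1).choose (c+2) = 0 := Nat.choose_eq_zero_of_lt (by omega)
    simpa [h0] using h1.symm
  | succ s =>
    rw [Finset.sum_range_succ']
    have h0 : (c+0).choose (c+1) = 0 := Nat.choose_eq_zero_of_lt (by omega)
    rw [h0, add_zero]
    have : ∀ t, (c + (t+1)).choose (c+1) = ((c+1)+t).choose (c+1) := by intro t; congr 1; ring
    rw [Finset.sum_congr rfl fun t _ => this t, hockey (c+1) s]
    congr 2 <;> ring

lemma Dc_closed : ∀ m : ℕ, ∀ s : ℕ, s ≤ m + 1 →
    Dc m s + (m+s).choose (m+1) = (m+s).choose s := by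
  intro m
  induction m with
  | zero =>
    intro s hs
    interval_cases s <;> simp [Dc]
  | succ m ih =>
    intro s hs
    by_cases hs2 : s ≤ m + 1
    · have hrec : Dc (m+1) s = ∑ t ∈ Finset.range (s+1), Dc m t := by
        simp [Dc, hs2]
      have key : ∑ t ∈ Finset.range (s+1), (Dc m t + (m+t).choose (m+1))
          = ∑ t ∈ Finset.range (s+1), (m+t).choose m := by
        apply Finset.sum_congr rfl
        intro t ht
        rw [ih t (by have := Finset.mem_range.mp ht; omega)]
        have h := Nat.choose_symm (show m ≤ m + t by omega)
        simpa [show m + t - m = t by omega] using h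
      rw [Finset.sum_add_distrib] at key
      have S1 : ∑ t ∈ Finset.range (s+1), (m+t).choose m = (m+s+1).choose (m+1) := hockey m s
      have S2 : ∑ t ∈ Finset.range (s+1), (m+t).choose (m+1) = (m+s+1).choose (m+2) := hockey' m s
      rw [S1, S2] at key
      rw [hrec]
      have hsymm : (m+1+s).choose s = (m+1+s).choose (m+1) := by
        have h := Nat.choose_symm (show m+1 ≤ m+1+s by omega)
        simpa [show m+1+s - (m+1) = s by omega] using h
      rw [hsymm]
      have e1 : (m+1+s) = (m+s+1) := by ring
      have e2 : (m+1+1) = m+2 := by ring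
      rw [e1, e2]
      omega
    · have hseq : s = m + 2 := by omega
      have hrec : Dc (m+1) s = 0 := by
        simp [Dc, show ¬ (s ≤ m+1) from hs2]
      rw [hrec, hseq, zero_add]

open Choose in
lemma lucas_step (n k : ℕ) : n.choose k % 2 = (Nat.choose (n % 2) (k % 2) * Nat.choose (n / 2) (k / 2)) % 2 :=
  choose_modEq_choose_mod_mul_choose_div_nat (p := 2)

lemma choose_pow2_sub_one_odd : ∀ a j : ℕ, j ≤ 2^a - 1 → (2^a - 1).choose j % 2 = 1 := by
  intro a
  induction a with
  | zero => intro j hj; interval_cases j <;> simp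
  | succ a ih =>
    intro j hj
    have h2a : 1 ≤ 2^a := Nat.one_le_two_pow
    have hpow : 2^(a+1) = 2 * 2^a := by rw [pow_succ]; ring
    have hn : (2^(a+1) - 1) % 2 = 1 := by omega
    have hn2 : (2^(a+1) - 1) / 2 = 2^a - 1 := by omega
    rw [lucas_step, hn, hn2]
    have hj2 : j / 2 ≤ 2^a - 1 := by omega
    have hk : Nat.choose 1 (j % 2) = 1 := by
      have : j % 2 < 2 := Nat.mod_lt _ (by norm_num)
      interval_cases h : j % 2 <;> simp
    rw [hk, one_mul]
    exact ih _ hj2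

lemma Dc_odd (r : ℕ) (hr : 1 ≤ r) : Dc (2^r - 1) (2^r - 1) % 2 = 1 := by
  set m := 2^r - 1 with hm
  have h2r : 2 ≤ 2^r := by calc 2 = 2^1 := rfl
                                _ ≤ 2^r := Nat.pow_le_pow_right (by norm_num) hr
  have hclosed := Dc_closed m m (by omega)
  have hp : 2^r = 2 * 2^(r-1) := by
    rw [← pow_succ']; congr 1; omega
  have h2a : 1 ≤ 2^(r-1) := Nat.one_le_two_pow
  have heven : (m + m).choose m % 2 = 0 := by
    rw [lucas_step]
    have h1 : (m + m) % 2 = 0 := by omega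
    have h2 : m % 2 = 1 := by omega
    rw [h1, h2]
    simp
  have hodd : (m + m).choose (m+1) % 2 = 1 := by
    rw [lucas_step]
    have h1 : (m + m) % 2 = 0 := by omega
    have h3 : (m+1) % 2 = 0 := by omega
    have h4 : (m + m) / 2 = m := by omega
    have h5 : (m+1) / 2 = 2^(r-1) := by omega
    rw [h1, h3, h4, h5]
    simp only [Nat.choose_self, Nat.choose_zero_right, one_mul]
    exact choose_pow2_sub_one_odd r (2^(r-1)) (by omega)
  omega

open Finset

def peF (m : ℕ) (p : Fin m → ℕ) (t : ℕ) : ℕ := if h : t < m then p ⟨t, h⟩ else 0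

def Eset (m s : ℕ) : Finset (Fin m → ℕ) :=
  (Fintype.piFinset fun j : Fin m => Finset.range ((j:ℕ)+2)).filter
    (fun p => (∑ j, p j) = s ∧ ∀ k < m, (∑ t ∈ Finset.range (k+1), peF m p t) ≤ k+1)

lemma mem_Eset {m s : ℕ} {p : Fin m → ℕ} :
    p ∈ Eset m s ↔ (∀ j : Fin m, p j ∈ Finset.range ((j:ℕ)+2)) ∧ (∑ j, p j) = s ∧
      ∀ k < m, (∑ t ∈ Finset.range (k+1), peF m p t) ≤ k+1 := by
  rw [Eset, Finset.mem_filter, Fintype.mem_piFinset]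

lemma pe_total (m : ℕ) (p : Fin m → ℕ) :
    ∑ t ∈ Finset.range m, peF m p t = ∑ j, p j := by
  rw [← Fin.sum_univ_eq_sum_range (fun t => peF m p t) m]
  apply Finset.sum_congr rfl
  intro j _
  simp [peF, j.isLt]

lemma pe_snoc_lt (m : ℕ) (q : Fin m → ℕ) (e : ℕ) (t : ℕ) (ht : t < m) :
    peF (m+1) (Fin.snoc q e) t = peF m q t := by
  simp only [peF, dif_pos ht, dif_pos (show t < m+1 by omega)]
  have : (⟨t, show t < m+1 by omega⟩ : Fin (m+1)) = Fin.castSucc ⟨t, ht⟩ := rfl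
  rw [this, Fin.snoc_castSucc]

lemma pe_castSucc (m : ℕ) (p : Fin (m+1) → ℕ) (t : ℕ) (ht : t < m) :
    peF m (fun j => p (Fin.castSucc j)) t = peF (m+1) p t := by
  simp only [peF, dif_pos ht, dif_pos (show t < m+1 by omega)]
  congr 1

lemma Eset_card : ∀ m s, (Eset m s).card = Dc m s := by
  intro m
  induction m with
  | zero =>
    intro s
    by_cases hs : s = 0
    · subst hs
      rw [show Dc 0 0 = 1 from rfl]
      rw [Eset, Finset.filter_true_of_mem, Fintype.card_piFinset]
      · simp
      · intro p _
        refine ⟨by simp, by omega⟩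
    · rw [show Dc 0 s = if s = 0 then 1 else 0 from rfl, if_neg hs]
      rw [Eset, Finset.filter_false_of_mem, Finset.card_empty]
      intro p _
      simp only [not_and]
      intro h
      exact absurd (by simpa using h.symm) hs
  | succ m ih =>
    intro s
    by_cases hs2 : s ≤ m + 1
    · have hcard : (Eset (m+1) s).card
          = ((Finset.range (s+1)).sigma (fun e => Eset m (s - e))).card := by
        refine Finset.card_nbij'
          (i := fun p => (⟨p (Fin.last m), fun j => p (Fin.castSucc j)⟩ :
            (_ : ℕ) × (Fin m → ℕ)))
          (j := fun z => Fin.snoc z.2 z.1) ?_ ?_ ?_ ?_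
        · -- maps into sigma
          intro p hp
          rw [Finset.mem_coe, mem_Eset] at hp
          obtain ⟨hbox, htot, hok⟩ := hp
          have hle : p (Fin.last m) ≤ s := by
            rw [← htot]
            exact Finset.single_le_sum (fun i _ => Nat.zero_le _) (Finset.mem_univ _)
          rw [Finset.mem_coe, Finset.mem_sigma]
          dsimp only
          constructor
          · exact Finset.mem_range.mpr (by omega)
          · rw [mem_Eset]
            refine ⟨?_, ?_, ?_⟩
            · intro j
              simpa using hbox (Fin.castSucc j)
            · have := Fin.sum_univ_castSucc (f := p)
              omega
            · intro k hk
              have hb := hok k (by omega)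
              calc ∑ t ∈ Finset.range (k+1), peF m (fun j => p (Fin.castSucc j)) t
                  = ∑ t ∈ Finset.range (k+1), peF (m+1) p t := by
                    refine Finset.sum_congr rfl fun t ht => pe_castSucc m p t ?_
                    have := Finset.mem_range.mp ht; omega
                _ ≤ k + 1 := hb
        · -- back into Eset (m+1) s
          rintro ⟨e, q⟩ hz
          rw [Finset.mem_coe, Finset.mem_sigma, Finset.mem_range] at hz
          obtain ⟨he, hq⟩ := hz
          rw [mem_Eset] at hq
          obtain ⟨hbox, htot, hok⟩ := hq
          dsimp only at he hbox htot hok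
          show Fin.snoc q e ∈ Eset (m+1) s
          rw [mem_Eset]
          refine ⟨?_, ?_, ?_⟩
          · intro j
            refine Fin.lastCases ?_ ?_ j
            · rw [Fin.snoc_last]
              refine Finset.mem_range.mpr ?_
              simp only [Fin.val_last]
              omega
            · intro i
              rw [Fin.snoc_castSucc]
              simpa using hbox i
          · rw [Fin.sum_univ_castSucc]
            simp only [Fin.snoc_castSucc, Fin.snoc_last]
            omega
          · intro k hk
            by_cases hkm : k < m
            · rw [Finset.sum_congr rfl (fun t ht => pe_snoc_lt m q e t
                (by have := Finset.mem_range.mp ht; omega))]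
              exact hok k hkm
            · have hke : k = m := by omega
              rw [hke]
              have heq : ∑ t ∈ Finset.range (m+1), peF (m+1) (Fin.snoc q e) t
                  = ∑ j, (Fin.snoc q e : Fin (m+1) → ℕ) j := pe_total (m+1) _
              rw [heq, Fin.sum_univ_castSucc]
              simp only [Fin.snoc_castSucc, Fin.snoc_last]
              omega
        · -- left inverse
          intro p _
          refine funext (fun j => ?_)
          refine Fin.lastCases ?_ ?_ j
          · simp
          · intro i; simp
        · -- right inverse
          rintro ⟨e, q⟩ _
          simp
      rw [hcard, Finset.card_sigma]
      rw [Finset.sum_congr rfl (fun e (_ : e ∈ Finset.range (s+1)) => ih (s - e))]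
      have hrefl := Finset.sum_range_reflect (fun t => Dc m t) (s+1)
      simp only [Nat.add_sub_cancel] at hrefl
      rw [show Dc (m+1) s = ∑ t ∈ Finset.range (s+1), Dc m t by simp [Dc, hs2]]
      rw [← hrefl]
    · -- s > m+1 : empty
      rw [show Dc (m+1) s = 0 by simp [Dc, hs2]]
      rw [Eset, Finset.filter_false_of_mem, Finset.card_empty]
      intro p _
      simp only [not_and]
      intro htot hok
      have hb := hok m (by omega)
      rw [pe_total (m+1) p] at hb
      omega

open MvPolynomial

noncomputable def Tideal (n : ℕ) : Ideal (MvPolynomial (Fin n) (ZMod 2)) :=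
  Ideal.span (Set.range fun i : Fin n =>
    X i ^ 2 +
      if (i : ℕ) = 0 then 0
      else X (⟨(i : ℕ) - 1, Nat.lt_of_le_of_lt (Nat.sub_le _ _) i.isLt⟩ : Fin n) * X i)

section PolyPart
variable {n : ℕ}

/-- padded access -/
def Aa (α : Fin n →₀ ℕ) (t : ℕ) : ℕ := if h : t < n then α ⟨t, h⟩ else 0

/-- prefix sums -/
def Pa (α : Fin n →₀ ℕ) (k : ℕ) : ℕ := ∑ t ∈ Finset.range (k+1), Aa α t

def okA (α : Fin n →₀ ℕ) : Prop := ∀ k : ℕ, Pa α k ≤ k + 1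

lemma Aa_add (α β : Fin n →₀ ℕ) (t : ℕ) : Aa (α + β) t = Aa α t + Aa β t := by
  unfold Aa; split <;> simp

lemma Pa_add (α β : Fin n →₀ ℕ) (k : ℕ) : Pa (α + β) k = Pa α k + Pa β k := by
  unfold Pa
  rw [← Finset.sum_add_distrib]
  exact Finset.sum_congr rfl fun t _ => Aa_add α β t

lemma Aa_single (i : Fin n) (c : ℕ) (t : ℕ) :
    Aa (Finsupp.single i c) t = if t = (i:ℕ) then c else 0 := by
  unfold Aa
  split
  · rename_i h
    rw [Finsupp.single_apply]
    by_cases he : t = (i:ℕ)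
    · rw [if_pos he, if_pos (by exact (Fin.ext he.symm))]
    · rw [if_neg he, if_neg (fun hh => he (by simp [hh]))]
  · rename_i h
    rw [if_neg (fun he : t = (i:ℕ) => h (by rw [he]; exact i.isLt))]

lemma Pa_single (i : Fin n) (c : ℕ) (k : ℕ) :
    Pa (Finsupp.single i c) k = if (i:ℕ) ≤ k then c else 0 := by
  unfold Pa
  rw [Finset.sum_congr rfl (fun t _ => Aa_single i c t)]
  rw [Finset.sum_ite_eq' (Finset.range (k+1)) ((i:ℕ)) (fun _ => c)]
  simp [Nat.lt_succ_iff]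

lemma Pa_le_total (α : Fin n →₀ ℕ) (k : ℕ) : Pa α k ≤ ∑ j, α j := by
  have h : Pa α k ≤ ∑ t ∈ Finset.range (max (k+1) n), Aa α t := by
    apply Finset.sum_le_sum_of_subset
    apply Finset.range_subset_range.mpr (le_max_left _ _)
  refine h.trans ?_
  have : ∑ t ∈ Finset.range (max (k+1) n), Aa α t = ∑ t ∈ Finset.range n, Aa α t := by
    rw [← Finset.sum_subset (Finset.range_subset_range.mpr (le_max_right _ _))]
    intro x _ hx
    unfold Aa
    rw [dif_neg (by simpa using hx)]
  rw [this, ← Fin.sum_univ_eq_sum_range (fun t => Aa α t) n]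
  apply le_of_eq
  apply Finset.sum_congr rfl
  intro j _
  simp [Aa, j.isLt]

lemma Pa_eq_total (α : Fin n →₀ ℕ) (k : ℕ) (hk : n ≤ k + 1) : Pa α k = ∑ j, α j := by
  unfold Pa
  rw [← Finset.sum_subset (Finset.range_subset_range.mpr hk) (fun x _ hx => by
    unfold Aa; rw [dif_neg (by simpa using hx)])]
  rw [← Fin.sum_univ_eq_sum_range (fun t => Aa α t) n]
  apply Finset.sum_congr rfl
  intro j _
  simp [Aa, j.isLt]

end PolyPart

section PolyPart2
variable {n : ℕ}
open Finsupp

def Fn (n : ℕ) : Finset (Fin n) := Finset.univ.filter (fun i => (i:ℕ) < n - 1)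

noncomputable def tauF (n : ℕ) : Fin n →₀ ℕ := ∑ i ∈ Fn n, Finsupp.single i 1

def muF (α : Fin n →₀ ℕ) : ℕ := ∑ j : Fin n, (j:ℕ) * α j

lemma tau_apply (j : Fin n) : tauF n j = if (j:ℕ) < n - 1 then 1 else 0 := by
  rw [tauF, Finset.sum_apply']
  rw [Finset.sum_congr rfl (fun i _ => Finsupp.single_apply)]
  rw [Finset.sum_ite_eq' (Fn n) j (fun _ => 1)]
  simp [Fn]

lemma Fn_eq (hn : 1 ≤ n) :
    Fn n = (Finset.univ : Finset (Fin (n-1))).map (Fin.castLEEmb (Nat.sub_le n 1)) := by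
  ext i
  simp only [Fn, Finset.mem_filter, Finset.mem_univ, true_and, Finset.mem_map,
    Fin.castLEEmb_apply]
  constructor
  · intro hi
    exact ⟨⟨(i:ℕ), hi⟩, by ext; simp⟩
  · rintro ⟨j, -, rfl⟩
    simpa using j.isLt

lemma Fn_card (hn : 1 ≤ n) : (Fn n).card = n - 1 := by
  rw [Fn_eq hn, Finset.card_map, Finset.card_univ, Fintype.card_fin]

lemma Tmon_eq : (∏ i ∈ Fn n, X i : MvPolynomial (Fin n) (ZMod 2)) = monomial (tauF n) 1 := by
  rw [tauF, monomial_sum_one]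
  apply Finset.prod_congr rfl
  intro i _
  rw [← X_pow_eq_monomial, pow_one]

lemma add_self_mv (p : MvPolynomial (Fin n) (ZMod 2)) : p + p = 0 := by
  have h : p + p = (2 : ZMod 2) • p := by
    rw [two_smul]
  rw [h, show (2 : ZMod 2) = 0 from rfl, zero_smul]

lemma mk_move (i : Fin n) (q : MvPolynomial (Fin n) (ZMod 2)) :
    Ideal.Quotient.mk (Tideal n) (X i ^ 2 * q) =
    Ideal.Quotient.mk (Tideal n)
      ((if (i : ℕ) = 0 then 0
        else X (⟨(i : ℕ) - 1, Nat.lt_of_le_of_lt (Nat.sub_le _ _) i.isLt⟩ : Fin n) * X i) * q) := by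
  rw [Ideal.Quotient.eq]
  have hsub : X i ^ 2 * q -
      (if (i : ℕ) = 0 then 0
        else X (⟨(i : ℕ) - 1, Nat.lt_of_le_of_lt (Nat.sub_le _ _) i.isLt⟩ : Fin n) * X i) * q
      = (X i ^ 2 +
      if (i : ℕ) = 0 then 0
      else X (⟨(i : ℕ) - 1, Nat.lt_of_le_of_lt (Nat.sub_le _ _) i.isLt⟩ : Fin n) * X i) * q := by
    rw [add_mul, sub_eq_iff_eq_add]
    rw [add_assoc, ← add_mul, add_self_mv, zero_mul, add_zero]
  rw [hsub]
  apply Ideal.mul_mem_right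
  apply Ideal.subset_span
  exact ⟨i, rfl⟩

lemma mu_single (i : Fin n) (c : ℕ) : muF (Finsupp.single i c) = (i:ℕ) * c := by
  rw [muF]
  rw [Finset.sum_eq_single i (fun b _ hb => by
    rw [Finsupp.single_eq_of_ne' (Ne.symm hb), Nat.mul_zero])
    (fun h => absurd (Finset.mem_univ i) h)]
  rw [Finsupp.single_eq_same]

lemma mu_add (α β : Fin n →₀ ℕ) : muF (α + β) = muF α + muF β := by
  rw [muF, muF, muF, ← Finset.sum_add_distrib]
  apply Finset.sum_congr rfl
  intro j _
  rw [Finsupp.add_apply, Nat.mul_add]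

lemma tot_single (i : Fin n) (c : ℕ) : (∑ j, Finsupp.single i c j) = c := by
  rw [Finset.sum_eq_single i (fun b _ hb => Finsupp.single_eq_of_ne' (Ne.symm hb))
    (fun h => absurd (Finset.mem_univ i) h), Finsupp.single_eq_same]

lemma tot_add (α β : Fin n →₀ ℕ) : (∑ j, (α + β) j) = (∑ j, α j) + ∑ j, β j := by
  rw [← Finset.sum_add_distrib]
  exact Finset.sum_congr rfl fun j _ => Finsupp.add_apply α β j

lemma Pa_mono (α : Fin n →₀ ℕ) {k k' : ℕ} (h : k ≤ k') : Pa α k ≤ Pa α k' := by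
  apply Finset.sum_le_sum_of_subset
  exact Finset.range_subset_range.mpr (by omega)

end PolyPart2

section RedPart
variable {n : ℕ}
open Finsupp

lemma red (hn : 2 ≤ n) : ∀ N : ℕ, ∀ α : Fin n →₀ ℕ, muF α ≤ N →
    (∀ j : Fin n, (j:ℕ) = n - 1 → α j = 0) → (∑ j, α j) = n - 1 →
    ((okA α → Ideal.Quotient.mk (Tideal n) (monomial α 1) =
        Ideal.Quotient.mk (Tideal n) (∏ i ∈ Fn n, X i)) ∧
     (¬ okA α → Ideal.Quotient.mk (Tideal n) (monomial α (1 : ZMod 2)) = 0)) := by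
  intro N
  induction N using Nat.strong_induction_on with
  | _ N ih =>
    intro α hmu hlast htot
    by_cases hsq : ∀ j : Fin n, α j ≤ 1
    · -- squarefree case: α = tauF n
      have hok : okA α := by
        intro k
        calc Pa α k ≤ ∑ t ∈ Finset.range (k+1), 1 := by
              apply Finset.sum_le_sum
              intro t _
              unfold Aa
              split
              · exact hsq _
              · exact Nat.zero_le _
          _ = k + 1 := by simp
      have heq : α = tauF n := by
        -- sum over Fn = n - 1
        have hsplit : (∑ j ∈ Fn n, α j) + ∑ j ∈ Finset.univ.filter
            (fun j : Fin n => ¬ ((j:ℕ) < n - 1)), α j = n - 1 := by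
          rw [Fn, Finset.sum_filter_add_sum_filter_not]
          exact htot
        have hzero : ∑ j ∈ Finset.univ.filter (fun j : Fin n => ¬ ((j:ℕ) < n - 1)), α j = 0 := by
          apply Finset.sum_eq_zero
          intro j hjm
          simp only [Finset.mem_filter, Finset.mem_univ, true_and, not_lt] at hjm
          exact hlast j (by have := j.isLt; omega)
        have hFn : ∑ j ∈ Fn n, α j = n - 1 := by omega
        have hall : ∀ j ∈ Fn n, α j = 1 := by
          by_contra hcon
          push_neg at hcon
          obtain ⟨j0, hj0m, hj0⟩ := hcon
          have hj00 : α j0 = 0 := by have := hsq j0; omega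
          have : ∑ j ∈ Fn n, α j = ∑ j ∈ (Fn n).erase j0, α j := by
            rw [← Finset.add_sum_erase _ _ hj0m, hj00, zero_add]
          have hle : ∑ j ∈ (Fn n).erase j0, α j ≤ ((Fn n).erase j0).card • 1 := by
            apply Finset.sum_le_card_nsmul
            intro x _
            exact hsq x
          rw [Finset.card_erase_of_mem hj0m, Fn_card (by omega), smul_eq_mul, mul_one] at hle
          omega
        ext j
        rw [tau_apply]
        by_cases hj : (j:ℕ) < n - 1
        · rw [if_pos hj]
          exact hall j (by simp [Fn, hj])
        · rw [if_neg hj]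
          exact hlast j (by have := j.isLt; omega)
      constructor
      · intro _
        rw [heq, Tmon_eq]
      · intro hnok
        exact absurd hok hnok
    · -- there is a square
      push_neg at hsq
      obtain ⟨j, hj2⟩ := hsq
      have hj2' : 2 ≤ α j := hj2
      set δ : Fin n →₀ ℕ := α - Finsupp.single j 2 with hδdef
      have hle : Finsupp.single j 2 ≤ α := Finsupp.single_le_iff.mpr hj2'
      have hδ : Finsupp.single j 2 + δ = α := by
        rw [hδdef, add_tsub_cancel_of_le hle]
      have hmon : (monomial α (1 : ZMod 2)) = X j ^ 2 * monomial δ 1 := by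
        rw [X_pow_eq_monomial, monomial_mul, one_mul, hδ]
      -- prefix decomposition
      have hPaα : ∀ k, Pa α k = Pa δ k + (if (j:ℕ) ≤ k then 2 else 0) := by
        intro k
        rw [← hδ, Pa_add, Pa_single]
        omega
      by_cases hj0 : (j:ℕ) = 0
      · -- i = 0 : zero
        have hmk : Ideal.Quotient.mk (Tideal n) (monomial α (1:ZMod 2)) = 0 := by
          rw [hmon, mk_move, if_pos hj0, zero_mul, map_zero]
        have hnok : ¬ okA α := by
          intro hok
          have h0 := hok 0
          have hP0 : Pa α 0 = α j := by
            rw [Pa, Finset.sum_range_one]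
            unfold Aa
            rw [dif_pos (by omega : (0:ℕ) < n)]
            congr 1
            exact Fin.ext (by simp [hj0])
          omega
        exact ⟨fun hok => absurd hok hnok, fun _ => hmk⟩
      · -- move the ball
        have hjlt : (j:ℕ) < n := j.isLt
        have hjne : (j:ℕ) ≠ n - 1 := by
          intro hc
          have := hlast j hc
          omega
        set j' : Fin n := ⟨(j:ℕ) - 1, Nat.lt_of_le_of_lt (Nat.sub_le _ _) j.isLt⟩ with hj'def
        set β : Fin n →₀ ℕ := Finsupp.single j' 1 + Finsupp.single j 1 + δ with hβdef
        have hmkeq : Ideal.Quotient.mk (Tideal n) (monomial α (1:ZMod 2)) =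
            Ideal.Quotient.mk (Tideal n) (monomial β 1) := by
          rw [hmon, mk_move, if_neg hj0]
          congr 1
          rw [hβdef]
          rw [show (X j' : MvPolynomial (Fin n) (ZMod 2)) = monomial (Finsupp.single j' 1) 1 by
            rw [← X_pow_eq_monomial, pow_one]]
          rw [show (X j : MvPolynomial (Fin n) (ZMod 2)) = monomial (Finsupp.single j 1) 1 by
            rw [← X_pow_eq_monomial, pow_one]]
          rw [monomial_mul, monomial_mul, one_mul, one_mul]
        -- hypotheses for β
        have hmuβ : muF β + 1 = muF α := by
          rw [hβdef, mu_add, mu_add, mu_single, mu_single]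
          rw [← hδ, mu_add, mu_single]
          have : (j':ℕ) = (j:ℕ) - 1 := rfl
          rw [this]
          omega
        have hlastβ : ∀ i : Fin n, (i:ℕ) = n - 1 → β i = 0 := by
          intro i hi
          rw [hβdef]
          rw [Finsupp.add_apply, Finsupp.add_apply]
          have hji : j ≠ i := by
            intro hc
            rw [hc] at hj2'
            have := hlast i hi
            omega
          have hj'i : j' ≠ i := by
            intro hc
            have : (j':ℕ) = (i:ℕ) := by rw [hc]
            have hj'v : (j':ℕ) = (j:ℕ) - 1 := rfl
            omega
          rw [Finsupp.single_eq_of_ne' hj'i, Finsupp.single_eq_of_ne' hji]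
          have hδi : δ i = 0 := by
            rw [hδdef, Finsupp.tsub_apply]
            have := hlast i hi
            omega
          omega
        have htotβ : (∑ i, β i) = n - 1 := by
          rw [hβdef, tot_add, tot_add, tot_single, tot_single]
          have htotδ : (∑ i, α i) = 2 + ∑ i, δ i := by
            rw [← hδ, tot_add, tot_single]
          omega
        have hPaβ : ∀ k, Pa β k = Pa δ k + (if (j:ℕ) - 1 ≤ k then 1 else 0)
            + (if (j:ℕ) ≤ k then 1 else 0) := by
          intro k
          rw [hβdef, Pa_add, Pa_add, Pa_single, Pa_single]
          have : (j':ℕ) = (j:ℕ) - 1 := rfl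
          rw [this]
          omega
        -- equivalence of okA
        have hfwd : okA α → okA β := by
          intro hok k
          have h1 := hok k
          have h2 := hok ((j:ℕ))
          rw [hPaβ k]
          rw [hPaα k] at h1
          rw [hPaα ((j:ℕ))] at h2
          by_cases hk : k = (j:ℕ) - 1
          · have hmono : Pa δ k ≤ Pa δ ((j:ℕ)) := Pa_mono δ (by omega)
            have hjk : ¬ ((j:ℕ) ≤ k) := by omega
            rw [if_pos (by omega), if_neg hjk]
            rw [if_pos (le_refl _)] at h2
            omega
          · by_cases hk2 : (j:ℕ) ≤ k
            · rw [if_pos (by omega), if_pos hk2]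
              rw [if_pos hk2] at h1
              omega
            · rw [if_neg (by omega), if_neg hk2]
              rw [if_neg hk2] at h1
              omega
        have hbwd : okA β → okA α := by
          intro hok k
          have h1 := hok k
          rw [hPaβ k] at h1
          rw [hPaα k]
          by_cases hk2 : (j:ℕ) ≤ k
          · rw [if_pos hk2]
            rw [if_pos hk2, if_pos (by omega)] at h1
            omega
          · rw [if_neg hk2]
            rw [if_neg hk2] at h1
            omega
        have hmuN : 2 ≤ muF α := by
          have hterm : (j:ℕ) * α j ≤ muF α := by
            rw [muF]
            exact Finset.single_le_sum (f := fun i : Fin n => (i:ℕ) * α i)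
              (fun i _ => Nat.zero_le _) (Finset.mem_univ j)
          have : 1 ≤ (j:ℕ) := by omega
          nlinarith
        have hN1 : muF β < N := by omega
        obtain ⟨IH1, IH2⟩ := ih (muF β) hN1 β le_rfl hlastβ htotβ
        constructor
        · intro hok
          rw [hmkeq]
          exact IH1 (hfwd hok)
        · intro hnok
          rw [hmkeq]
          exact IH2 (fun hokβ => hnok (hbwd hokβ))
end RedPart

section LamPart
variable {n : ℕ}
open Finsupp

/-- indicator of "good" exponents -/
def cInd (n : ℕ) (α : Fin n →₀ ℕ) : ZMod 2 :=
  if ((∀ j : Fin n, (j:ℕ) = n - 1 → α j = 0) ∧ (∑ j, α j) = n - 1 ∧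
      ∀ k < n, Pa α k ≤ k + 1) then 1 else 0

noncomputable def AF (n : ℕ) : Finset (Fin n →₀ ℕ) :=
  (Fintype.piFinset (fun _ : Fin n => Finset.range n)).map
    (Finsupp.equivFunOnFinite.symm.toEmbedding)

noncomputable def lam (n : ℕ) (p : MvPolynomial (Fin n) (ZMod 2)) : ZMod 2 :=
  ∑ β ∈ AF n, cInd n β * coeff β p

lemma lam_add (p q : MvPolynomial (Fin n) (ZMod 2)) : lam n (p + q) = lam n p + lam n q := by
  rw [lam, lam, lam, ← Finset.sum_add_distrib]
  apply Finset.sum_congr rfl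
  intro β _
  rw [coeff_add, mul_add]

lemma cInd_mem_AF (hn : 1 ≤ n) (α : Fin n →₀ ℕ) (h : cInd n α ≠ 0) : α ∈ AF n := by
  rw [cInd] at h
  split at h
  · rename_i hc
    obtain ⟨hlast, htot, hok⟩ := hc
    rw [AF, Finset.mem_map]
    refine ⟨Finsupp.equivFunOnFinite α, ?_, ?_⟩
    · rw [Fintype.mem_piFinset]
      intro i
      rw [Finset.mem_range]
      have hle : α i ≤ n - 1 := by
        rw [← htot]
        exact Finset.single_le_sum (f := fun j : Fin n => α j)
          (fun i _ => Nat.zero_le _) (Finset.mem_univ i)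
      have : Finsupp.equivFunOnFinite α i = α i := rfl
      rw [this]
      omega
    · exact Finsupp.equivFunOnFinite.symm_apply_apply α
  · exact absurd rfl h

lemma lam_monomial (hn : 1 ≤ n) (α : Fin n →₀ ℕ) (b : ZMod 2) :
    lam n (monomial α b) = cInd n α * b := by
  rw [lam]
  rw [Finset.sum_congr rfl (fun β _ => by rw [coeff_monomial])]
  rw [Finset.sum_congr rfl (fun β (_ : β ∈ AF n) => by
    rw [show (cInd n β * if α = β then b else 0) = (if α = β then cInd n β * b else 0) by
      split <;> simp])]
  rw [Finset.sum_ite_eq (AF n) α (fun β => cInd n β * b)]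
  split
  · rfl
  · rename_i hmem
    by_cases hc : cInd n α = 0
    · rw [hc, zero_mul]
    · exact absurd (cInd_mem_AF hn α hc) hmem

section LamPart2
variable {n : ℕ}
open Finsupp

lemma cInd_add_two (α : Fin n →₀ ℕ) (i : Fin n) (hi : (i:ℕ) = 0) (hn : 2 ≤ n) :
    cInd n (α + Finsupp.single i 2) = 0 := by
  rw [cInd, if_neg]
  intro hc
  obtain ⟨-, -, hok⟩ := hc
  have h0 := hok 0 (by omega)
  rw [Pa_add, Pa_single, if_pos (by omega)] at h0
  omega

lemma cInd_move (α : Fin n →₀ ℕ) (i : Fin n) (hi : ¬ (i:ℕ) = 0) (hn : 2 ≤ n) :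
    cInd n (α + Finsupp.single i 2) =
    cInd n (α + Finsupp.single
      (⟨(i : ℕ) - 1, Nat.lt_of_le_of_lt (Nat.sub_le _ _) i.isLt⟩ : Fin n) 1
      + Finsupp.single i 1) := by
  set i' : Fin n := ⟨(i : ℕ) - 1, Nat.lt_of_le_of_lt (Nat.sub_le _ _) i.isLt⟩ with hi'def
  have hi'v : (i':ℕ) = (i:ℕ) - 1 := rfl
  by_cases hlasti : (i:ℕ) = n - 1
  · -- both sides zero
    rw [cInd, cInd, if_neg, if_neg]
    · intro hc
      have := hc.1 i hlasti
      rw [Finsupp.add_apply, Finsupp.add_apply, Finsupp.single_eq_same] at this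
      omega
    · intro hc
      have := hc.1 i hlasti
      rw [Finsupp.add_apply, Finsupp.single_eq_same] at this
      omega
  · have hilt : (i:ℕ) < n - 1 := by have := i.isLt; omega
    -- pointwise values at last coordinates agree
    have hval1 : ∀ j : Fin n, (j:ℕ) = n - 1 → (α + Finsupp.single i 2 : Fin n →₀ ℕ) j = α j := by
      intro j hj
      rw [Finsupp.add_apply, Finsupp.single_apply, if_neg (fun hc => by
        have hcv : (i:ℕ) = (j:ℕ) := congrArg Fin.val hc
        omega), add_zero]
    have hval2 : ∀ j : Fin n, (j:ℕ) = n - 1 →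
        (α + Finsupp.single i' 1 + Finsupp.single i 1 : Fin n →₀ ℕ) j = α j := by
      intro j hj
      rw [Finsupp.add_apply, Finsupp.add_apply, Finsupp.single_apply, Finsupp.single_apply,
        if_neg (fun hc => by
          have hcv : (i':ℕ) = (j:ℕ) := congrArg Fin.val hc
          rw [hi'v] at hcv
          omega),
        if_neg (fun hc => by
          have hcv : (i:ℕ) = (j:ℕ) := congrArg Fin.val hc
          omega), add_zero, add_zero]
    have htot1 : (∑ j, (α + Finsupp.single i 2 : Fin n →₀ ℕ) j) = (∑ j, α j) + 2 := by
      rw [tot_add, tot_single]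
    have htot2 : (∑ j, (α + Finsupp.single i' 1 + Finsupp.single i 1 : Fin n →₀ ℕ) j) = (∑ j, α j) + 2 := by
      rw [tot_add, tot_add, tot_single, tot_single]
    have hPa1 : ∀ k, Pa (α + Finsupp.single i 2) k = Pa α k + (if (i:ℕ) ≤ k then 2 else 0) := by
      intro k
      rw [Pa_add, Pa_single]
    have hPa2 : ∀ k, Pa (α + Finsupp.single i' 1 + Finsupp.single i 1) k
        = Pa α k + (if (i:ℕ) - 1 ≤ k then 1 else 0) + (if (i:ℕ) ≤ k then 1 else 0) := by
      intro k
      rw [Pa_add, Pa_add, Pa_single, Pa_single, hi'v]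
    by_cases hP : Pa α ((i:ℕ) - 1) + 1 ≤ (i:ℕ)
    · -- ok-conditions equivalent
      rw [cInd, cInd]
      apply if_congr _ rfl rfl
      constructor
      · rintro ⟨hl, ht, hok⟩
        refine ⟨fun j hj => by rw [hval2 j hj, ← hval1 j hj]; exact hl j hj,
          by rw [htot2, ← htot1]; exact ht, ?_⟩
        intro k hk
        rw [hPa2 k]
        by_cases hki : k = (i:ℕ) - 1
        · subst hki
          rw [if_pos (by omega), if_neg (by omega)]
          omega
        · have h1 := hok k hk
          rw [hPa1 k] at h1
          by_cases hk2 : (i:ℕ) ≤ k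
          · rw [if_pos (by omega), if_pos hk2]
            rw [if_pos hk2] at h1
            omega
          · rw [if_neg (by omega), if_neg hk2]
            rw [if_neg hk2] at h1
            omega
      · rintro ⟨hl, ht, hok⟩
        refine ⟨fun j hj => by rw [hval1 j hj, ← hval2 j hj]; exact hl j hj,
          by rw [htot1, ← htot2]; exact ht, ?_⟩
        intro k hk
        have h1 := hok k hk
        rw [hPa2 k] at h1
        rw [hPa1 k]
        by_cases hk2 : (i:ℕ) ≤ k
        · rw [if_pos hk2]
          rw [if_pos hk2, if_pos (by omega)] at h1
          omega
        · rw [if_neg hk2]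
          rw [if_neg hk2] at h1
          omega
    · -- both fail
      rw [cInd, cInd, if_neg, if_neg]
      · rintro ⟨-, -, hok⟩
        have h1 := hok ((i:ℕ) - 1) (by omega)
        rw [hPa2 _] at h1
        rw [if_pos (le_refl _), if_neg (by omega)] at h1
        omega
      · rintro ⟨-, -, hok⟩
        have h1 := hok ((i:ℕ)) (by omega)
        rw [hPa1 _] at h1
        rw [if_pos (le_refl _)] at h1
        have hmono : Pa α ((i:ℕ) - 1) ≤ Pa α ((i:ℕ)) := Pa_mono α (by omega)
        omega

lemma lam_zero : lam n 0 = 0 := by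
  rw [lam]
  apply Finset.sum_eq_zero
  intro β _
  rw [coeff_zero, mul_zero]

lemma lam_mul_gen (hn : 2 ≤ n) (q : MvPolynomial (Fin n) (ZMod 2)) (i : Fin n) :
    lam n (q * (X i ^ 2 +
      if (i : ℕ) = 0 then 0
      else X (⟨(i : ℕ) - 1, Nat.lt_of_le_of_lt (Nat.sub_le _ _) i.isLt⟩ : Fin n) * X i)) = 0 := by
  induction q using MvPolynomial.induction_on' with
  | add p q hp hq =>
    rw [add_mul, lam_add, hp, hq, add_zero]
  | monomial α b =>
    rw [mul_add]
    by_cases hi : (i:ℕ) = 0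
    · rw [if_pos hi, mul_zero, add_zero]
      rw [show (monomial α b) * X i ^ 2 = monomial (α + Finsupp.single i 2) b by
        rw [X_pow_eq_monomial, monomial_mul, mul_one]]
      rw [lam_monomial (by omega), cInd_add_two α i hi hn, zero_mul]
    · rw [if_neg hi]
      set i' : Fin n := ⟨(i : ℕ) - 1, Nat.lt_of_le_of_lt (Nat.sub_le _ _) i.isLt⟩ with hi'def
      rw [show (monomial α b) * X i ^ 2 = monomial (α + Finsupp.single i 2) b by
        rw [X_pow_eq_monomial, monomial_mul, mul_one]]
      rw [show (monomial α b) * (X i' * X i) = monomial (α + Finsupp.single i' 1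
          + Finsupp.single i 1) b by
        rw [show (X i' : MvPolynomial (Fin n) (ZMod 2)) = monomial (Finsupp.single i' 1) 1 by
          rw [← X_pow_eq_monomial, pow_one]]
        rw [show (X i : MvPolynomial (Fin n) (ZMod 2)) = monomial (Finsupp.single i 1) 1 by
          rw [← X_pow_eq_monomial, pow_one]]
        rw [monomial_mul, monomial_mul, mul_one, mul_one, add_assoc]]
      rw [lam_add, lam_monomial (by omega), lam_monomial (by omega)]
      rw [cInd_move α i hi hn]
      rw [← add_mul, CharTwo.add_self_eq_zero, zero_mul]

lemma lam_vanish (hn : 2 ≤ n) : ∀ x ∈ Tideal n, lam n x = 0 := by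
  have key : ∀ x ∈ Tideal n, ∀ q, lam n (q * x) = 0 := by
    intro x hx
    refine Submodule.span_induction ?_ ?_ ?_ ?_ hx
    · rintro y ⟨i, rfl⟩ q
      exact lam_mul_gen hn q i
    · intro q
      rw [mul_zero, lam_zero]
    · intro a b _ _ ha hb q
      rw [mul_add, lam_add, ha, hb, add_zero]
    · intro r a _ ha q
      rw [smul_eq_mul, ← mul_assoc]
      exact ha (q * r)
  intro x hx
  have := key x hx 1
  rwa [one_mul] at this

lemma lam_T (hn : 2 ≤ n) : lam n (∏ i ∈ Fn n, X i) = 1 := by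
  rw [Tmon_eq, lam_monomial (by omega), mul_one, cInd, if_pos]
  refine ⟨?_, ?_, ?_⟩
  · intro j hj
    rw [tau_apply, if_neg (by omega)]
  · rw [Finset.sum_congr rfl (fun j (_ : j ∈ Finset.univ) => tau_apply j)]
    rw [← Finset.card_filter]
    exact Fn_card (by omega)
  · intro k _
    calc Pa (tauF n) k ≤ ∑ t ∈ Finset.range (k+1), 1 := by
          apply Finset.sum_le_sum
          intro t _
          unfold Aa
          split
          · rw [tau_apply]; split <;> omega
          · omega
      _ = k + 1 := by simp

lemma T_notin (hn : 2 ≤ n) :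
    (∏ i ∈ Fn n, X i : MvPolynomial (Fin n) (ZMod 2)) ∉ Tideal n := by
  intro h
  have h1 := lam_vanish hn _ h
  rw [lam_T hn] at h1
  exact one_ne_zero h1

end LamPart2
end LamPart

section Assembly
variable {n : ℕ}
open Finsupp

def pe' (m : ℕ) (p : Fin m → ℕ) (t : ℕ) : ℕ := if h : t < m then p ⟨t, h⟩ else 0

noncomputable def Dm (n : ℕ) (p : Fin (n-1) → ℕ) : Fin n →₀ ℕ :=
  ∑ j : Fin (n-1), Finsupp.single (Fin.castLE (Nat.sub_le n 1) j) (p j)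

lemma Dm_apply (p : Fin (n-1) → ℕ) (i : Fin n) : Dm n p i = pe' (n-1) p (i:ℕ) := by
  rw [Dm, Finset.sum_apply']
  rw [Finset.sum_congr rfl (fun j _ => Finsupp.single_apply)]
  by_cases hi : (i:ℕ) < n - 1
  · rw [Finset.sum_eq_single (⟨(i:ℕ), hi⟩ : Fin (n-1))
      (fun b _ hb => if_neg (fun hc => hb (by
        have hcv : (b:ℕ) = (i:ℕ) := congrArg Fin.val hc
        exact Fin.ext hcv)))
      (fun h => absurd (Finset.mem_univ _) h)]
    rw [if_pos (Fin.ext (by simp)), pe', dif_pos hi]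
  · rw [Finset.sum_eq_zero (fun j _ => if_neg (fun hc => by
      have hcv : (j:ℕ) = (i:ℕ) := congrArg Fin.val hc
      have := j.isLt
      omega)), pe', dif_neg hi]

lemma degree_eq_univ_sum (α : Fin n →₀ ℕ) : α.degree = ∑ j, α j := by
  rw [Finsupp.degree]
  exact Finset.sum_subset (Finset.subset_univ _)
    (fun x _ hx => Finsupp.notMem_support_iff.mp hx)

lemma Dm_total (p : Fin (n-1) → ℕ) : (∑ i, Dm n p i) = ∑ j, p j := by
  rw [Finset.sum_congr rfl (fun i (_ : i ∈ Finset.univ) => Dm_apply p i)]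
  rw [Fin.sum_univ_eq_sum_range (fun t => pe' (n-1) p t) n]
  rw [← Finset.sum_subset (Finset.range_subset_range.mpr (Nat.sub_le n 1))
    (fun x _ hx => by rw [pe', dif_neg (by simpa using hx)])]
  rw [← Fin.sum_univ_eq_sum_range (fun t => pe' (n-1) p t) (n-1)]
  apply Finset.sum_congr rfl
  intro j _
  rw [pe', dif_pos j.isLt]

lemma Dm_last (p : Fin (n-1) → ℕ) : ∀ j : Fin n, (j:ℕ) = n - 1 → Dm n p j = 0 := by
  intro j hj
  rw [Dm_apply, pe', dif_neg (by omega)]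

lemma Dm_Pa (p : Fin (n-1) → ℕ) (k : ℕ) :
    Pa (Dm n p) k = ∑ t ∈ Finset.range (k+1), pe' (n-1) p t := by
  rw [Pa]
  apply Finset.sum_congr rfl
  intro t _
  by_cases ht : t < n
  · rw [Aa, dif_pos ht]
    have := Dm_apply p ⟨t, ht⟩
    simpa using this
  · rw [Aa, dif_neg ht, pe', dif_neg (by omega)]

lemma okA_Dm (p : Fin (n-1) → ℕ) (htot : (∑ j, p j) = n - 1) (hn : 2 ≤ n) :
    okA (Dm n p) ↔ (∀ k < n - 1, ∑ t ∈ Finset.range (k+1), pe' (n-1) p t ≤ k + 1) := by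
  constructor
  · intro h k _
    rw [← Dm_Pa]
    exact h k
  · intro h k
    by_cases hk : k < n - 1
    · rw [Dm_Pa]
      exact h k hk
    · rw [Pa_eq_total (Dm n p) k (by omega), Dm_total, htot]
      omega
end Assembly

section Final
variable {n : ℕ}
open Finsupp

lemma prod_pow_eq_monomial_Dm (p : Fin (n-1) → ℕ) :
    (∏ j : Fin (n-1), (X (Fin.castLE (Nat.sub_le n 1) j) : MvPolynomial (Fin n) (ZMod 2)) ^ p j)
      = monomial (Dm n p) 1 := by
  rw [Dm, monomial_sum_one]
  apply Finset.prod_congr rfl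
  intro j _
  rw [X_pow_eq_monomial]

lemma homComp_monomial (d : Fin n →₀ ℕ) (k : ℕ) :
    homogeneousComponent k (monomial d (1 : ZMod 2)) =
      if d.degree = k then monomial d 1 else 0 := by
  have hmem : (monomial d (1 : ZMod 2)) ∈ homogeneousSubmodule (Fin n) (ZMod 2) d.degree :=
    (mem_homogeneousSubmodule _ _).mpr (isHomogeneous_monomial _ rfl)
  rw [homogeneousComponent_of_mem hmem]
  by_cases h : d.degree = k
  · rw [if_pos h, if_pos h.symm]
  · rw [if_neg h, if_neg (fun hc => h hc.symm)]

lemma quot_add_self (y : MvPolynomial (Fin n) (ZMod 2) ⧸ Tideal n) : y + y = 0 := by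
  obtain ⟨z, rfl⟩ := Ideal.Quotient.mk_surjective (I := Tideal n) y
  rw [← map_add, add_self_mv, map_zero]

lemma odd_smul_quot (c : ℕ) (hc : c % 2 = 1) (y : MvPolynomial (Fin n) (ZMod 2) ⧸ Tideal n) :
    c • y = y := by
  obtain ⟨l, hl⟩ : ∃ l, c = 2 * l + 1 := ⟨c / 2, by omega⟩
  rw [hl, add_nsmul, one_nsmul, mul_nsmul, two_nsmul, quot_add_self, smul_zero, zero_add]

lemma main_expansion (hn : 2 ≤ n) (hDodd : Dc (n-1) (n-1) % 2 = 1) :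
    Ideal.Quotient.mk (Tideal n)
        (homogeneousComponent (n - 1)
          (∏ i ∈ Finset.univ.filter (fun i : Fin n => (i : ℕ) < n - 1),
            ∑ e ∈ Finset.range ((i : ℕ) + 2), X i ^ e)) =
      Ideal.Quotient.mk (Tideal n)
        (∏ i ∈ Finset.univ.filter (fun i : Fin n => (i : ℕ) < n - 1), X i) := by
  have h1 : (∏ i ∈ Finset.univ.filter (fun i : Fin n => (i : ℕ) < n - 1),
      ∑ e ∈ Finset.range ((i : ℕ) + 2), (X i : MvPolynomial (Fin n) (ZMod 2)) ^ e)
      = ∏ j : Fin (n-1), ∑ e ∈ Finset.range ((j : ℕ) + 2),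
          (X (Fin.castLE (Nat.sub_le n 1) j) : MvPolynomial (Fin n) (ZMod 2)) ^ e := by
    rw [show Finset.univ.filter (fun i : Fin n => (i : ℕ) < n - 1) = Fn n from rfl]
    rw [Fn_eq (by omega), Finset.prod_map]
    apply Finset.prod_congr rfl
    intro j _
    rw [Fin.castLEEmb_apply]
    apply Finset.sum_congr
    · rw [Fin.coe_castLE]
    · intros; rfl
  rw [h1, Finset.prod_univ_sum]
  rw [map_sum, map_sum]
  -- rewrite each term
  have hterm : ∀ p ∈ Fintype.piFinset (fun j : Fin (n-1) => Finset.range ((j:ℕ) + 2)),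
      Ideal.Quotient.mk (Tideal n)
        (homogeneousComponent (n-1) (∏ j : Fin (n-1),
          (X (Fin.castLE (Nat.sub_le n 1) j) : MvPolynomial (Fin n) (ZMod 2)) ^ p j)) =
      if ((∑ j, p j) = n - 1 ∧ ∀ k < n - 1, (∑ t ∈ Finset.range (k+1), peF (n-1) p t) ≤ k+1)
      then Ideal.Quotient.mk (Tideal n)
        (∏ i ∈ Finset.univ.filter (fun i : Fin n => (i : ℕ) < n - 1), X i)
      else 0 := by
    intro p _
    rw [prod_pow_eq_monomial_Dm, homComp_monomial]
    have hdeg : (Dm n p).degree = ∑ j, p j := by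
      rw [degree_eq_univ_sum, Dm_total]
    by_cases htot : (∑ j, p j) = n - 1
    · rw [if_pos (by omega : (Dm n p).degree = n - 1)]
      have hred := red hn (muF (Dm n p)) (Dm n p) le_rfl (Dm_last p)
        (by rw [Dm_total]; exact htot)
      by_cases hok : okA (Dm n p)
      · rw [hred.1 hok]
        rw [if_pos ⟨htot, ((okA_Dm p htot hn).mp hok)⟩]
        rfl
      · rw [hred.2 hok]
        rw [if_neg]
        intro hc
        exact hok ((okA_Dm p htot hn).mpr hc.2)
    · rw [if_neg (by omega : ¬ (Dm n p).degree = n - 1), map_zero]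
      rw [if_neg (fun hc => htot hc.1)]
  rw [Finset.sum_congr rfl hterm]
  rw [← Finset.sum_filter]
  rw [Finset.sum_const]
  have hE : (Fintype.piFinset (fun j : Fin (n-1) => Finset.range ((j:ℕ) + 2))).filter
      (fun p => (∑ j, p j) = n - 1 ∧
        ∀ k < n - 1, (∑ t ∈ Finset.range (k+1), peF (n-1) p t) ≤ k+1)
      = Eset (n-1) (n-1) := by
    rw [Eset]
  rw [hE, Eset_card]
  exact odd_smul_quot _ hDodd _

/-- Let `n = 2^r` with `r ≥ 1`, and let `W = ∏_{j=1}^{n−1} (1 + t_j + ⋯ + t_j^j)`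
(zero-based: `t_j ↔ X i` with `i < n−1`, and the `j`-th factor is `∑_{e<i+2} (X i)^e`).
Then in `(ℤ/2)[t₁,…,tₙ]/𝒯ₙ` the image of the degree-`(n−1)` homogeneous component of `W`
equals the image of `t₁t₂⋯t_{n−1}`, and this image is nonzero. -/
theorem stmt12 (n r : ℕ) (hr : 1 ≤ r) (hn : n = 2 ^ r) :
    Ideal.Quotient.mk (Tideal n)
        (homogeneousComponent (n - 1)
          (∏ i ∈ Finset.univ.filter (fun i : Fin n => (i : ℕ) < n - 1),
            ∑ e ∈ Finset.range ((i : ℕ) + 2), X i ^ e)) =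
      Ideal.Quotient.mk (Tideal n)
        (∏ i ∈ Finset.univ.filter (fun i : Fin n => (i : ℕ) < n - 1), X i) ∧
    Ideal.Quotient.mk (Tideal n)
        (∏ i ∈ Finset.univ.filter (fun i : Fin n => (i : ℕ) < n - 1), X i) ≠ 0 := by
  have hn2 : 2 ≤ n := by
    rw [hn]
    calc 2 = 2^1 := rfl
      _ ≤ 2^r := Nat.pow_le_pow_right (by norm_num) hr
  constructor
  · apply main_expansion hn2
    rw [hn]
    exact Dc_odd r hr
  · intro hc
    rw [Ideal.Quotient.eq_zero_iff_mem] at hc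
    exact T_notin hn2 hc

end Final
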